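/- (Bernstein's localization principle for l-spaces.) Let X and T be l-spaces and φ : X → T a continuous map. Let an l-group G act continuously on X preserving each fiber of φ (i.e. φ(g·x) = φ(x) for all g ∈ G, x ∈ X), and let χ : G → ℂˣ be a character. Suppose that for every t ∈ T the fiber φ⁻¹(t) (with its subspace topology and the restricted G-action) satisfies D(φ⁻¹(t))^{G,χ} = 0. Then D(X)^{G,χ} = 0. -/

import Mathlib

open scoped Classical

noncomputable section

/-- The space `S(X)` of compactly supported locally constant `ℂ`-valued functions
on a topological space `X`, as a `ℂ`-submodule of `X → ℂ`. -/
def SSp (X : Type*) [TopologicalSpace X] : Submodule ℂ (X → ℂ) where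
  carrier := {f | IsLocallyConstant f ∧ HasCompactSupport f}
  add_mem' := fun hf hg => ⟨hf.1.add hg.1, hf.2.add hg.2⟩
  zero_mem' := ⟨IsLocallyConstant.const 0, by
    simpa using (HasCompactSupport.zero : HasCompactSupport (fun _ : X => (0:ℂ)))⟩
  smul_mem' := fun c f hf =>
    ⟨hf.1.comp fun y => c • y, by exact hf.2.smul_left (f := fun _ : X => c)⟩

/-- The space `D(X) = S(X)*` of distributions on `X`. -/
abbrev Dst (X : Type*) [TopologicalSpace X] := SSp X →ₗ[ℂ] ℂ

/-- `T ∈ D(X)^{G,χ}`: the distribution `T` on `X` is `(G,χ)`-equivariant for the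
action of `G` on `X`, i.e. `g·T = χ(g)·T` where `(g·T)(f) = T(x ↦ f(g·x))`. -/
def IsEqvDist {X : Type*} [TopologicalSpace X] {G : Type*} [SMul G X]
    (χ : G → ℂ) (T : Dst X) : Prop :=
  ∀ (g : G) (f₁ f₂ : SSp X), (∀ x, f₂.1 x = f₁.1 (g • x)) → T f₂ = χ g * T f₁

/-- `T ∈ D(Y)^{G,χ}` for a `G`-invariant subset `Y ⊆ X` (with the subspace topology
and the restricted action): `g·T = χ(g)·T` where `(g·T)(f) = T(y ↦ f(g·y))`. -/
def IsEqvDistOn {X : Type*} [TopologicalSpace X] {G : Type*} [SMul G X]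
    (Y : Set X) (χ : G → ℂ) (T : Dst Y) : Prop :=
  ∀ (g : G) (f₁ f₂ : SSp Y),
    (∀ (x : X) (hx : x ∈ Y) (hgx : g • x ∈ Y), f₂.1 ⟨x, hx⟩ = f₁.1 ⟨g • x, hgx⟩) →
    T f₂ = χ g * T f₁

/-! ### Auxiliary material -/

section Aux

variable {X : Type*} [TopologicalSpace X]

/-- The `ℂ`-valued indicator function of a set. -/
def indC (W : Set X) : X → ℂ := fun x => if x ∈ W then 1 else 0

lemma indC_locallyConstant {W : Set X} (hW : IsClopen W) : IsLocallyConstant (indC W) := by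
  intro s
  have h : indC W ⁻¹' s =
      ((if (1:ℂ) ∈ s then W else ∅) ∪ (if (0:ℂ) ∈ s then Wᶜ else ∅)) := by
    ext x
    by_cases hx : x ∈ W <;> simp only [indC, Set.mem_preimage, hx, if_true, if_false] <;>
      split_ifs <;> simp_all
  rw [h]
  split_ifs <;>
    simp [hW.2, hW.1.isOpen_compl, IsOpen.union, hW.2.union hW.1.isOpen_compl]

lemma indC_mem {W : Set X} (hW : IsClopen W) (hWc : IsCompact W) : indC W ∈ SSp X := by
  refine ⟨indC_locallyConstant hW, ?_⟩
  have hsub : tsupport (indC W) ⊆ W := by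
    apply closure_minimal _ hW.1
    intro x hx
    by_contra hxW
    exact hx (by simp [indC, hxW])
  exact hWc.of_isClosed_subset (isClosed_tsupport _) hsub

/-- The element of `SSp X` given by the indicator function of a compact clopen set. -/
def indSSp (W : Set X) (hW : IsClopen W) (hWc : IsCompact W) : SSp X :=
  ⟨indC W, indC_mem hW hWc⟩

lemma isCompact_ne_zero (f : SSp X) : IsCompact {x | f.1 x ≠ 0} := by
  have hopen : IsOpen (f.1 ⁻¹' {0}) := f.2.1 {0}
  have hcl : IsClosed {x | f.1 x ≠ 0} := by
    have h : {x | f.1 x ≠ 0} = (f.1 ⁻¹' {0})ᶜ := by ext x; simp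
    rw [h]; exact hopen.isClosed_compl
  exact f.2.2.of_isClosed_subset hcl (fun x hx => subset_tsupport _ hx)

/-- Multiplication by the indicator of a clopen set, as an operation on `SSp X`. -/
def cutS (f : SSp X) {W : Set X} (hW : IsClopen W) : SSp X :=
  ⟨fun x => f.1 x * indC W x,
    ⟨f.2.1.mul (indC_locallyConstant hW), f.2.2.mul_right⟩⟩

/-- Restriction of an element of `SSp X` to a closed subset. -/
def restrictS {Z : Set X} (hZ : IsClosed Z) (f : SSp X) : SSp Z := by
  refine ⟨fun z => f.1 z, f.2.1.comp_continuous continuous_subtype_val, ?_⟩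
  have h1 : IsCompact ((Subtype.val : Z → X) ⁻¹' (tsupport f.1)) := by
    rw [Subtype.isCompact_iff, Subtype.image_preimage_coe]
    first
      | exact f.2.2.inter_right hZ
      | (rw [Set.inter_comm]; exact f.2.2.inter_right hZ)
  apply h1.of_isClosed_subset isClosed_closure
  apply closure_minimal _ ((isClosed_tsupport f.1).preimage continuous_subtype_val)
  intro z hz
  exact subset_tsupport f.1 hz

/-- Composition with the action of a group element, as an operation on `SSp X`. -/
def compSmulS {G : Type*} [Group G] [MulAction G X] [ContinuousConstSMul G X]
    (g : G) (f : SSp X) : SSp X :=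
  ⟨fun x => f.1 (g • x),
    ⟨f.2.1.comp_continuous (continuous_const_smul g),
      f.2.2.comp_homeomorph (Homeomorph.smul g)⟩⟩

/-- In an l-space, every point of an open set has a compact clopen neighborhood
inside that set. -/
lemma exists_clopen_compact_nhd {H : Type*} [TopologicalSpace H] [LocallyCompactSpace H]
    [T2Space H] [TotallyDisconnectedSpace H] {x : H} {U : Set H}
    (hU : IsOpen U) (hx : x ∈ U) :
    ∃ V : Set H, IsClopen V ∧ IsCompact V ∧ x ∈ V ∧ V ⊆ U := by
  obtain ⟨s, hscomp, hxs, hsU⟩ := exists_compact_subset hU hx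
  obtain ⟨V, hVclopen, hxV, hVs⟩ :=
    (TopologicalSpace.IsTopologicalBasis.mem_nhds_iff
      loc_compact_Haus_tot_disc_of_zero_dim).mp (isOpen_interior.mem_nhds hxs)
  exact ⟨V, hVclopen, hscomp.of_isClosed_subset hVclopen.1 (hVs.trans interior_subset),
    hxV, (hVs.trans interior_subset).trans hsU⟩

/-- Disjointification of a finite family of clopen sets. -/
lemma exists_partition {α : Type*} [TopologicalSpace α] {n : ℕ} (W : Fin n → Set α)
    (hW : ∀ i, IsClopen (W i)) :
    ∃ V : Fin n → Set α, (∀ i, IsClopen (V i)) ∧ (∀ i, V i ⊆ W i) ∧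
      ∀ y, y ∈ ⋃ i, W i → ∃! i, y ∈ V i := by
  classical
  refine ⟨fun i => W i \ ⋃ j ∈ Finset.Iio i, W j, ?_, ?_, ?_⟩
  · intro i
    exact (hW i).diff
      ⟨Set.Finite.isClosed_biUnion (Finset.finite_toSet _) (fun j _ => (hW j).1),
        isOpen_biUnion fun j _ => (hW j).2⟩
  · intro i; exact Set.diff_subset
  · intro y hy
    obtain ⟨i, hi⟩ := Set.mem_iUnion.mp hy
    set s : Finset (Fin n) := Finset.univ.filter (fun j => y ∈ W j) with hs
    have hne : s.Nonempty := ⟨i, by simp [hs, hi]⟩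
    set i₀ := s.min' hne with hi₀
    have hi₀W : y ∈ W i₀ := by
      have := s.min'_mem hne
      simp only [hs, Finset.mem_filter] at this
      exact this.2
    refine ⟨i₀, ⟨hi₀W, ?_⟩, ?_⟩
    · intro hmem
      obtain ⟨j, hj, hyj⟩ := Set.mem_iUnion₂.mp hmem
      have hjs : j ∈ s := by simp [hs, hyj]
      exact absurd (s.min'_le j hjs) (not_le.mpr (Finset.mem_Iio.mp hj))
    · rintro j ⟨hjW, hjn⟩
      by_contra hne'
      rcases lt_or_gt_of_ne hne' with hlt | hgt
      · have hjs : j ∈ s := by simp [hs, hjW]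
        exact absurd (s.min'_le j hjs) (not_le.mpr hlt)
      · exact hjn (Set.mem_biUnion (Finset.mem_Iio.mpr hgt) hi₀W)

lemma sum_indC {α : Type*} {n : ℕ} (V : Fin n → Set α) {y : α} (h : ∃! i, y ∈ V i) :
    ∑ i, indC (V i) y = 1 := by
  obtain ⟨i₀, hi₀, huniq⟩ := h
  rw [Finset.sum_eq_single i₀]
  · simp [indC, hi₀]
  · intro j _ hj
    have hyj : y ∉ V j := fun hyj => hj (huniq j hyj)
    simp [indC, hyj]
  · intro hmem; exact absurd (Finset.mem_univ i₀) hmem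

/-- Extension lemma: a compactly supported locally constant function on a closed
subset of an l-space extends to the whole space. -/
lemma exists_extension {X : Type*} [TopologicalSpace X] [LocallyCompactSpace X] [T2Space X]
    [TotallyDisconnectedSpace X] {Z : Set X} (hZ : IsClosed Z) (h : SSp Z) :
    ∃ d : SSp X, ∀ x (hx : x ∈ Z), d.1 x = h.1 ⟨x, hx⟩ := by
  classical
  set K : Set X := Subtype.val '' {z : Z | h.1 z ≠ 0} with hK
  have hKc : IsCompact K := (isCompact_ne_zero h).image continuous_subtype_val
  have hchoice : ∀ x : X, ∃ (W : Set X) (c : ℂ), IsClopen W ∧ IsCompact W ∧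
      (x ∈ K → x ∈ W) ∧ ∀ w (hw : w ∈ W) (hwZ : w ∈ Z), h.1 ⟨w, hwZ⟩ = c := by
    intro x
    by_cases hx : x ∈ K
    · obtain ⟨z₀, hz, rfl⟩ := hx
      obtain ⟨U, hUopen, hzU, hUconst⟩ := h.2.1.exists_open z₀
      obtain ⟨O, hOopen, hOeq⟩ := isOpen_induced_iff.mp hUopen
      have hzO : (z₀ : X) ∈ O := by rw [← hOeq] at hzU; exact hzU
      obtain ⟨V, hVclopen, hVcomp, hzV, hVO⟩ := exists_clopen_compact_nhd hOopen hzO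
      refine ⟨V, h.1 z₀, hVclopen, hVcomp, fun _ => hzV, ?_⟩
      intro w hw hwZ
      have hwU : (⟨w, hwZ⟩ : Z) ∈ U := by rw [← hOeq]; exact hVO hw
      exact hUconst _ hwU
    · exact ⟨∅, 0, isClopen_empty, isCompact_empty, fun hmem => absurd hmem hx,
        fun w hw _ => absurd hw (Set.notMem_empty w)⟩
  choose W c hWclopen hWcomp hWmem hWconst using hchoice
  obtain ⟨s, hs⟩ := hKc.elim_finite_subcover W (fun x => (hWclopen x).2)
    (fun x hx => Set.mem_iUnion.mpr ⟨x, hWmem x hx⟩)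
  set n := s.card with hn
  set e := s.equivFin with he
  set Wi : Fin n → Set X := fun i => W ((e.symm i) : X) with hWi
  obtain ⟨V, hVclopen, hVsub, hVuniq⟩ := exists_partition Wi (fun i => hWclopen _)
  have hVcomp : ∀ i, IsCompact (V i) :=
    fun i => (hWcomp _).of_isClosed_subset (hVclopen i).1 (hVsub i)
  set ci : Fin n → ℂ := fun i => c ((e.symm i) : X) with hci
  refine ⟨∑ i, ci i • indSSp (V i) (hVclopen i) (hVcomp i), ?_⟩
  have hdval : ∀ x : X,
      ((∑ i, ci i • indSSp (V i) (hVclopen i) (hVcomp i) : SSp X) : X → ℂ) x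
        = ∑ i, ci i * indC (V i) x := by
    intro x
    have hcoe := map_sum ((SSp X).subtype)
      (fun i => ci i • indSSp (V i) (hVclopen i) (hVcomp i)) Finset.univ
    simp only [Submodule.coe_subtype] at hcoe
    rw [hcoe, Finset.sum_apply]
    simp [indSSp]
  intro x hx
  rw [hdval]
  by_cases hzero : h.1 ⟨x, hx⟩ = 0
  · rw [hzero]
    apply Finset.sum_eq_zero
    intro i _
    by_cases hxV : x ∈ V i
    · have hc : h.1 ⟨x, hx⟩ = ci i := hWconst _ x (hVsub i hxV) hx
      rw [← hc, hzero, zero_mul]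
    · simp [indC, hxV]
  · have hxK : x ∈ K := ⟨⟨x, hx⟩, hzero, rfl⟩
    have hxUnion : x ∈ ⋃ i, Wi i := by
      obtain ⟨t, ht, hxt⟩ := Set.mem_iUnion₂.mp (hs hxK)
      refine Set.mem_iUnion.mpr ⟨e ⟨t, ht⟩, ?_⟩
      simp only [hWi, Equiv.symm_apply_apply]
      exact hxt
    obtain ⟨i₀, hi₀, huniq⟩ := hVuniq x hxUnion
    rw [Finset.sum_eq_single i₀]
    · have hc : h.1 ⟨x, hx⟩ = ci i₀ := hWconst _ x (hVsub i₀ hi₀) hx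
      simp [indC, hi₀, hc]
    · intro j _ hj
      have hxj : x ∉ V j := fun hxj => hj (huniq j hxj)
      simp [indC, hxj]
    · intro hmem; exact absurd (Finset.mem_univ i₀) hmem

end Aux

/-- Bernstein's localization principle for l-spaces: let `φ : X → Y` be a
continuous map of l-spaces and let an l-group `G` act continuously on `X` preserving each
fiber of `φ`.  If `D(φ⁻¹(t))^{G,χ} = 0` for every `t`, then `D(X)^{G,χ} = 0`. -/
theorem stmt6
    (G : Type*) [Group G] [TopologicalSpace G] [IsTopologicalGroup G]
    [LocallyCompactSpace G] [T2Space G] [TotallyDisconnectedSpace G]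
    (X : Type*) [TopologicalSpace X] [LocallyCompactSpace X] [T2Space X]
    [TotallyDisconnectedSpace X]
    (Y : Type*) [TopologicalSpace Y] [LocallyCompactSpace Y] [T2Space Y]
    [TotallyDisconnectedSpace Y]
    [MulAction G X] [ContinuousSMul G X]
    (φ : X → Y) (hφ : Continuous φ)
    (hfib : ∀ (g : G) (x : X), φ (g • x) = φ x)
    (χ : G →* ℂˣ)
    (hfibers : ∀ t : Y, ∀ T : Dst ↥(φ ⁻¹' {t}),
      IsEqvDistOn (φ ⁻¹' {t}) (fun g => (χ g : ℂ)) T → T = 0)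
    (T : Dst X) (hT : IsEqvDist (fun g => (χ g : ℂ)) T) : T = 0 := by
  classical
  -- Step 1: for each fiber, the span of the `(G,χ)`-coinvariant relations is everything.
  have hspan : ∀ t : Y, ∀ h : SSp ↥(φ ⁻¹' {t}), h ∈ Submodule.span ℂ
      {q : SSp ↥(φ ⁻¹' {t}) | ∃ (g : G) (f₁ f₂ : SSp ↥(φ ⁻¹' {t})),
        q = f₂ - (χ g : ℂ) • f₁ ∧
        ∀ (x : X) (hx : x ∈ φ ⁻¹' {t}) (hgx : g • x ∈ φ ⁻¹' {t}),
          f₂.1 ⟨x, hx⟩ = f₁.1 ⟨g • x, hgx⟩} := by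
    intro t
    by_contra hcon
    push_neg at hcon
    obtain ⟨h, hh⟩ := hcon
    obtain ⟨ψ, hψne, hψbot⟩ := Submodule.exists_dual_map_eq_bot_of_notMem hh inferInstance
    have hψeq : IsEqvDistOn (φ ⁻¹' {t}) (fun g => (χ g : ℂ)) ψ := by
      intro g f₁ f₂ hcompat
      have hq : f₂ - (χ g : ℂ) • f₁ ∈ Submodule.span ℂ
          {q : SSp ↥(φ ⁻¹' {t}) | ∃ (g : G) (f₁ f₂ : SSp ↥(φ ⁻¹' {t})),
            q = f₂ - (χ g : ℂ) • f₁ ∧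
            ∀ (x : X) (hx : x ∈ φ ⁻¹' {t}) (hgx : g • x ∈ φ ⁻¹' {t}),
              f₂.1 ⟨x, hx⟩ = f₁.1 ⟨g • x, hgx⟩} :=
        Submodule.subset_span ⟨g, f₁, f₂, rfl, hcompat⟩
      have hz : ψ (f₂ - (χ g : ℂ) • f₁) = 0 := by
        have hmem : ψ (f₂ - (χ g : ℂ) • f₁) ∈ Submodule.map ψ _ := ⟨_, hq, rfl⟩
        rw [hψbot] at hmem
        exact hmem
      rw [map_sub, map_smul] at hz
      have := sub_eq_zero.mp hz
      simpa [smul_eq_mul] using this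
    have hzero := hfibers t ψ hψeq
    rw [hzero] at hψne
    exact hψne rfl
  -- Step 2: localization at a point of the base.
  have key : ∀ (f : SSp X) (t : Y), ∃ U : Set Y, IsClopen U ∧ t ∈ U ∧
      ∀ (V : Set Y) (hV : IsClopen V), V ⊆ U → T (cutS f (hV.preimage hφ)) = 0 := by
    intro f t
    have hZclosed : IsClosed (φ ⁻¹' {t}) := isClosed_singleton.preimage hφ
    -- property by span induction
    have hP : ∀ (h : SSp ↥(φ ⁻¹' {t})), h ∈ Submodule.span ℂ
        {q : SSp ↥(φ ⁻¹' {t}) | ∃ (g : G) (f₁ f₂ : SSp ↥(φ ⁻¹' {t})),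
          q = f₂ - (χ g : ℂ) • f₁ ∧
          ∀ (x : X) (hx : x ∈ φ ⁻¹' {t}) (hgx : g • x ∈ φ ⁻¹' {t}),
            f₂.1 ⟨x, hx⟩ = f₁.1 ⟨g • x, hgx⟩} →
        ∃ d : SSp X, (∀ x (hx : x ∈ φ ⁻¹' {t}), d.1 x = h.1 ⟨x, hx⟩) ∧
          ∀ (V : Set Y) (hV : IsClopen V), T (cutS d (hV.preimage hφ)) = 0 := by
      intro h hh
      induction hh using Submodule.span_induction with
      | mem q hq =>
        obtain ⟨g, f₁, f₂, rfl, hcompat⟩ := hq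
        obtain ⟨e, he⟩ := exists_extension hZclosed f₁
        refine ⟨compSmulS g e - (χ g : ℂ) • e, ?_, ?_⟩
        · intro x hx
          have hgx : g • x ∈ φ ⁻¹' {t} := by
            simp only [Set.mem_preimage, hfib g x]
            exact hx
          have hL : ((compSmulS g e - (χ g : ℂ) • e : SSp X) : X → ℂ) x
              = e.1 (g • x) - (χ g : ℂ) * e.1 x := by
            simp [compSmulS]
          rw [hL, he _ hgx, he _ hx, ← hcompat x hx hgx]
          simp
        · intro V hV
          have heq : cutS (compSmulS g e - (χ g : ℂ) • e) (hV.preimage hφ)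
              = cutS (compSmulS g e) (hV.preimage hφ)
                - (χ g : ℂ) • cutS e (hV.preimage hφ) := by
            apply Subtype.ext
            funext x
            simp [cutS, compSmulS]
            ring
          rw [heq, map_sub, map_smul]
          have hc : T (cutS (compSmulS g e) (hV.preimage hφ))
              = (χ g : ℂ) * T (cutS e (hV.preimage hφ)) := by
            apply hT g
            intro x
            have hind : indC (φ ⁻¹' V) (g • x) = indC (φ ⁻¹' V) x := by
              simp [indC, Set.mem_preimage, hfib g x]
            simp [cutS, compSmulS, hind]
          rw [hc]
          simp [smul_eq_mul]
      | zero =>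
        refine ⟨0, ?_, ?_⟩
        · intro x hx; simp
        · intro V hV
          have hz : cutS (0 : SSp X) (hV.preimage hφ) = 0 := by
            apply Subtype.ext; funext x; simp [cutS]
          rw [hz, map_zero]
      | add u v hu hv ihu ihv =>
        obtain ⟨d₁, hd₁, hd₁0⟩ := ihu
        obtain ⟨d₂, hd₂, hd₂0⟩ := ihv
        refine ⟨d₁ + d₂, ?_, ?_⟩
        · intro x hx
          have : ((d₁ + d₂ : SSp X) : X → ℂ) x = d₁.1 x + d₂.1 x := by simp
          rw [this, hd₁ x hx, hd₂ x hx]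
          simp
        · intro V hV
          have hsplit : cutS (d₁ + d₂) (hV.preimage hφ)
              = cutS d₁ (hV.preimage hφ) + cutS d₂ (hV.preimage hφ) := by
            apply Subtype.ext; funext x; simp [cutS]; ring
          rw [hsplit, map_add, hd₁0 V hV, hd₂0 V hV, add_zero]
      | smul a u hu ihu =>
        obtain ⟨d, hd, hd0⟩ := ihu
        refine ⟨a • d, ?_, ?_⟩
        · intro x hx
          have : ((a • d : SSp X) : X → ℂ) x = a * d.1 x := by simp
          rw [this, hd x hx]
          simp
        · intro V hV
          have hsplit : cutS (a • d) (hV.preimage hφ)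
              = a • cutS d (hV.preimage hφ) := by
            apply Subtype.ext; funext x; simp [cutS]; ring
          rw [hsplit, map_smul, hd0 V hV, smul_zero]
    obtain ⟨d, hd, hd0⟩ := hP (restrictS hZclosed f) (hspan t _)
    have hvanish : ∀ x ∈ φ ⁻¹' {t}, f.1 x = d.1 x := by
      intro x hx
      rw [hd x hx]
      rfl
    have hDcomp : IsCompact (φ '' {x | ((f - d : SSp X) : X → ℂ) x ≠ 0}) :=
      (isCompact_ne_zero (f - d)).image hφ
    have htmem : t ∈ (φ '' {x | ((f - d : SSp X) : X → ℂ) x ≠ 0})ᶜ := by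
      rintro ⟨x, hx, hxt⟩
      apply hx
      have hxZ : x ∈ φ ⁻¹' {t} := by simp [Set.mem_preimage, hxt]
      have : ((f - d : SSp X) : X → ℂ) x = f.1 x - d.1 x := by simp
      rw [this, hvanish x hxZ, sub_self]
    obtain ⟨U, hUclopen, hUcomp, htU, hUsub⟩ :=
      exists_clopen_compact_nhd hDcomp.isClosed.isOpen_compl htmem
    refine ⟨U, hUclopen, htU, ?_⟩
    intro V hV hVU
    have hcut : cutS f (hV.preimage hφ) = cutS d (hV.preimage hφ) := by
      apply Subtype.ext
      funext x
      simp only [cutS]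
      by_cases hx : x ∈ φ ⁻¹' V
      · have hnot : φ x ∉ φ '' {x | ((f - d : SSp X) : X → ℂ) x ≠ 0} :=
          hUsub (hVU hx)
        have hfd : f.1 x = d.1 x := by
          by_contra hne
          exact hnot ⟨x, by simp [sub_eq_zero, hne], rfl⟩
        rw [hfd]
      · simp [indC, hx]
    rw [hcut]
    exact hd0 V hV
  -- Step 3: assemble via a finite clopen partition of the image of the support.
  apply LinearMap.ext
  intro f
  rw [LinearMap.zero_apply]
  choose U hUclopen hUmem hUzero using key f
  have hCcomp : IsCompact (φ '' {x | f.1 x ≠ 0}) := (isCompact_ne_zero f).image hφ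
  obtain ⟨s, hs⟩ := hCcomp.elim_finite_subcover U (fun u => (hUclopen u).2)
    (fun u hu => Set.mem_iUnion.mpr ⟨u, hUmem u⟩)
  set n := s.card with hn
  set e := s.equivFin with he
  set Wi : Fin n → Set Y := fun i => U ((e.symm i) : Y) with hWi
  obtain ⟨V, hVclopen, hVsub, hVuniq⟩ := exists_partition Wi (fun i => hUclopen _)
  have hsum : f = ∑ i, cutS f ((hVclopen i).preimage hφ) := by
    apply Subtype.ext
    have hcoe := map_sum ((SSp X).subtype)
      (fun i => cutS f ((hVclopen i).preimage hφ)) Finset.univ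
    simp only [Submodule.coe_subtype] at hcoe
    funext x
    rw [hcoe, Finset.sum_apply]
    by_cases hx : f.1 x = 0
    · simp [cutS, hx]
    · have hxC : φ x ∈ φ '' {x | f.1 x ≠ 0} := ⟨x, hx, rfl⟩
      have hxU : φ x ∈ ⋃ i, Wi i := by
        obtain ⟨u, hu, hxu⟩ := Set.mem_iUnion₂.mp (hs hxC)
        refine Set.mem_iUnion.mpr ⟨e ⟨u, hu⟩, ?_⟩
        simp only [hWi, Equiv.symm_apply_apply]
        exact hxu
      have huniq := hVuniq (φ x) hxU
      have hval : ∀ i : Fin n, (cutS f ((hVclopen i).preimage hφ)).1 x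
          = f.1 x * indC (V i) (φ x) := by
        intro i
        simp [cutS, indC, Set.mem_preimage]
      calc f.1 x = f.1 x * ∑ i, indC (V i) (φ x) := by rw [sum_indC V huniq, mul_one]
        _ = ∑ i, f.1 x * indC (V i) (φ x) := by rw [Finset.mul_sum]
        _ = ∑ i, (cutS f ((hVclopen i).preimage hφ)).1 x := by
            exact Finset.sum_congr rfl fun i _ => (hval i).symm
  conv_lhs => rw [hsum]
  rw [map_sum]
  apply Finset.sum_eq_zero
  intro i _
  exact hUzero ((e.symm i) : Y) (V i) (hVclopen i) (hVsub i)
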